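/- arXiv:1911.06109 — 2 statements merged into one kernel-verified Lean document; each statement's English description precedes it below -/
import Mathlib

section
/- For any L-structure A, the theories T_u*(A) and T_i*(A) are companions (have the same pc models); in particular every model of T_u*(A) continues into a model of T_i*(A), and both theories have the joint continuation property. -/
open FirstOrder FirstOrder.Language

universe u v w w'

namespace PositiveLogic

/-- Positive formulas with `n` free variables: built from `⊥`, atomic formulas,
`∧`, `∨` and `∃`. -/
inductive PosForm (L : FirstOrder.Language.{u, v}) : ℕ → Type (max u v)
  | falsum {n : ℕ} : PosForm L n
  | equal {n : ℕ} (t u : L.Term (Fin n)) : PosForm L n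
  | rel {n l : ℕ} (R : L.Relations l) (ts : Fin l → L.Term (Fin n)) : PosForm L n
  | and {n : ℕ} (φ ψ : PosForm L n) : PosForm L n
  | or {n : ℕ} (φ ψ : PosForm L n) : PosForm L n
  | ex {n : ℕ} (φ : PosForm L (n + 1)) : PosForm L n

variable {L : FirstOrder.Language.{u, v}}

/-- Realization of a positive formula in a structure. -/
def PosForm.Realize {M : Type w} [L.Structure M] :
    ∀ {n : ℕ}, PosForm L n → (Fin n → M) → Prop
  | _, .falsum, _ => False
  | _, .equal t u, v => t.realize v = u.realize v
  | _, .rel R ts, v => Structure.RelMap R fun i => (ts i).realize v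
  | _, .and φ ψ, v => φ.Realize v ∧ ψ.Realize v
  | _, .or φ ψ, v => φ.Realize v ∨ ψ.Realize v
  | _, .ex φ, v => ∃ x : M, φ.Realize (Fin.snoc v x)

/-- A positive sentence `φ` (element of `PosForm L 0`) holds in `M`. -/
def PosRealize (M : Type w) [L.Structure M] (φ : PosForm L 0) : Prop :=
  φ.Realize (Fin.elim0 : Fin 0 → M)

/-- `Diag⁺*(M)`: the set of positive `L`-sentences true in `M`. -/
def posTheory (M : Type w) [L.Structure M] : Set (PosForm L 0) :=
  {φ | PosRealize M φ}

/-- `T_u*(M)`, identified with the set of positive `L`-sentences whose negation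
(an h-universal sentence) is true in `M`. -/
def TuStar (M : Type w) [L.Structure M] : Set (PosForm L 0) :=
  {φ | ¬ PosRealize M φ}

/-- A basic h-inductive sentence `∀ x̄ (φ(x̄) → ψ(x̄))` with `φ, ψ` positive.
(A general h-inductive sentence, a finite conjunction of such, is equivalent to
the set of its conjuncts.) -/
structure HInd (L : FirstOrder.Language.{u, v}) : Type (max u v) where
  n : ℕ
  hyp : PosForm L n
  concl : PosForm L n

/-- Realization of a basic h-inductive sentence. -/
def HInd.Realize (s : HInd L) (M : Type w) [L.Structure M] : Prop :=
  ∀ v : Fin s.n → M, s.hyp.Realize v → s.concl.Realize v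

/-- `M` is a model of the h-inductive theory `T`. -/
def HModels (M : Type w) [L.Structure M] (T : Set (HInd L)) : Prop :=
  ∀ s ∈ T, s.Realize M

/-- `T_i*(M)`: the set of (basic) h-inductive `L`-sentences true in `M`. -/
def TiStar (M : Type w) [L.Structure M] : Set (HInd L) :=
  {s | s.Realize M}

/-- `T_u(T)`: the h-universal consequences of `T`, identified with the set of
positive sentences `φ` such that `¬φ` holds in every model of `T`. -/
def TuOf (T : Set (HInd L)) : Set (PosForm L 0) :=
  {φ | ∀ (M : Type (max u v)) [L.Structure M], HModels M T → ¬ PosRealize M φ}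

/-- A homomorphism is an immersion if it preserves and reflects all positive
formulas. -/
def IsImmersion {A : Type w} {B : Type w'} [L.Structure A] [L.Structure B]
    (f : A →[L] B) : Prop :=
  ∀ {n : ℕ} (φ : PosForm L n) (v : Fin n → A), φ.Realize v ↔ φ.Realize (f ∘ v)

/-- A homomorphism `f : A → B` is a strong immersion if `B`, with parameters
from `A` interpreted via `f`, models `T_i(A)`, the full h-inductive
`L(A)`-theory of `A`. -/
def IsStrongImmersion {A : Type w} {B : Type w'} [L.Structure A] [L.Structure B]
    (f : A →[L] B) : Prop :=
  ∀ {n m : ℕ} (φ ψ : PosForm L (n + m)) (a : Fin m → A),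
    (∀ v : Fin n → A, φ.Realize (Fin.append v a) → ψ.Realize (Fin.append v a)) →
    ∀ v : Fin n → B, φ.Realize (Fin.append v (f ∘ a)) → ψ.Realize (Fin.append v (f ∘ a))

/-- `M` is a positively closed (pc) model of `T`: it models `T` and every
homomorphism from `M` into a model of `T` is an immersion. -/
def IsPC (T : Set (HInd L)) (M : Type (max u v)) [L.Structure M] : Prop :=
  HModels M T ∧
    ∀ (N : Type (max u v)) [L.Structure N], HModels N T → ∀ f : M →[L] N, IsImmersion f

/-- `T` has the joint continuation property (is positively complete). -/
def JCP (T : Set (HInd L)) : Prop :=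
  ∀ (A : Type (max u v)) [L.Structure A] (B : Type (max u v)) [L.Structure B],
    HModels A T → HModels B T →
      ∃ (C : Type (max u v)) (_ : L.Structure C),
        HModels C T ∧ Nonempty (A →[L] C) ∧ Nonempty (B →[L] C)

/-- `T₁` and `T₂` are `T`-complete. -/
def TComplete (T₁ T₂ T : Set (HInd L)) : Prop :=
  ∀ (A : Type (max u v)) [L.Structure A] (B : Type (max u v)) [L.Structure B],
    HModels A T₁ → HModels B T₂ →
      ∃ (C : Type (max u v)) (_ : L.Structure C),
        HModels C T ∧ Nonempty (A →[L] C) ∧ Nonempty (B →[L] C)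

/-- `T_u*(A)` viewed as an h-inductive theory: `¬φ` is `∀ (φ → ⊥)`. -/
def TuStarInd (A : Type w) [L.Structure A] : Set (HInd L) :=
  (fun φ => ⟨0, φ, PosForm.falsum⟩) '' TuStar (L := L) A
section Part1

variable {L : FirstOrder.Language.{u, v}}

namespace PosForm

variable {M : Type w} {N : Type w'} [L.Structure M] [L.Structure N]

@[simp] theorem realize_falsum {n} {v : Fin n → M} :
    (falsum : PosForm L n).Realize v ↔ False := Iff.rfl

@[simp] theorem realize_equal {n} {t u : L.Term (Fin n)} {v : Fin n → M} :
    (equal t u).Realize v ↔ t.realize v = u.realize v := Iff.rfl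

@[simp] theorem realize_rel' {n l} {R : L.Relations l} {ts : Fin l → L.Term (Fin n)}
    {v : Fin n → M} :
    (rel R ts).Realize v ↔ Structure.RelMap R fun i => (ts i).realize v := Iff.rfl

@[simp] theorem realize_and {n} {φ ψ : PosForm L n} {v : Fin n → M} :
    (and φ ψ).Realize v ↔ φ.Realize v ∧ ψ.Realize v := Iff.rfl

@[simp] theorem realize_or {n} {φ ψ : PosForm L n} {v : Fin n → M} :
    (or φ ψ).Realize v ↔ φ.Realize v ∨ ψ.Realize v := Iff.rfl

@[simp] theorem realize_ex {n} {φ : PosForm L (n + 1)} {v : Fin n → M} :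
    (ex φ).Realize v ↔ ∃ x : M, φ.Realize (Fin.snoc v x) := Iff.rfl

theorem realize_hom (f : M →[L] N) :
    ∀ {n} (φ : PosForm L n) (v : Fin n → M), φ.Realize v → φ.Realize (f ∘ v)
  | _, .falsum, _, h => h.elim
  | _, .equal t u, v, h => by
    simp only [Realize, HomClass.realize_term]
    exact congrArg f h
  | _, .rel R ts, v, h => by
    simp only [Realize, HomClass.realize_term]
    exact f.map_rel' R _ h
  | _, .and φ ψ, v, h => ⟨realize_hom f φ v h.1, realize_hom f ψ v h.2⟩
  | _, .or φ ψ, v, h =>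
    h.elim (fun h1 => Or.inl (realize_hom f φ v h1))
      (fun h2 => Or.inr (realize_hom f ψ v h2))
  | _, .ex φ, v, h => by
    obtain ⟨x, hx⟩ := realize_ex.1 h
    refine realize_ex.2 ⟨f x, ?_⟩
    rw [← Fin.comp_snoc]
    exact realize_hom f φ _ hx

/-- Relabelling the variables of a positive formula. -/
def relabel : ∀ {n m : ℕ}, (Fin n → Fin m) → PosForm L n → PosForm L m
  | _, _, σ, .falsum => .falsum
  | _, _, σ, .equal t u => .equal (t.relabel σ) (u.relabel σ)
  | _, _, σ, .rel R ts => .rel R fun i => (ts i).relabel σ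
  | _, _, σ, .and φ ψ => .and (relabel σ φ) (relabel σ ψ)
  | _, _, σ, .or φ ψ => .or (relabel σ φ) (relabel σ ψ)
  | _, _, σ, .ex φ => .ex (relabel (Fin.snoc (Fin.castSucc ∘ σ) (Fin.last _)) φ)

theorem realize_relabel :
    ∀ {n m : ℕ} (σ : Fin n → Fin m) (φ : PosForm L n) (v : Fin m → M),
      (relabel σ φ).Realize v ↔ φ.Realize (v ∘ σ)
  | _, _, σ, .falsum, v => Iff.rfl
  | _, _, σ, .equal t u, v => by simp [relabel, Realize, Term.realize_relabel]
  | _, _, σ, .rel R ts, v => by simp [relabel, Realize, Term.realize_relabel]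
  | _, _, σ, .and φ ψ, v => by
    simp only [relabel, Realize, realize_relabel]
  | _, _, σ, .or φ ψ, v => by
    simp only [relabel, Realize, realize_relabel]
  | _, _, σ, .ex φ, v => by
    simp only [relabel, Realize, realize_relabel]
    constructor <;> rintro ⟨x, hx⟩ <;> refine ⟨x, ?_⟩ <;>
      [skip; skip] <;>
      · convert hx using 2
        funext i
        refine Fin.lastCases ?_ (fun j => ?_) i <;>
          simp [Fin.snoc_castSucc, Fin.snoc_last, Function.comp]

/-- Existential closure of a positive formula. -/
def exs : ∀ {n : ℕ}, PosForm L n → PosForm L 0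
  | 0, φ => φ
  | _ + 1, φ => exs φ.ex

theorem realize_exs :
    ∀ {n : ℕ} (φ : PosForm L n), PosRealize M (exs φ) ↔ ∃ v : Fin n → M, φ.Realize v
  | 0, φ => ⟨fun h => ⟨_, h⟩, fun ⟨v, h⟩ => by
      show φ.Realize Fin.elim0
      rwa [Subsingleton.elim (Fin.elim0 : Fin 0 → M) v]⟩
  | n + 1, φ => by
    rw [show exs φ = exs φ.ex from rfl, realize_exs]
    constructor
    · rintro ⟨v, x, hx⟩
      exact ⟨Fin.snoc v x, hx⟩
    · rintro ⟨w, hw⟩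
      exact ⟨Fin.init w, w (Fin.last n), by rwa [Fin.snoc_init_self]⟩

theorem realize_foldr_and {n : ℕ} (l : List (PosForm L n)) (b : PosForm L n)
    (v : Fin n → M) :
    (l.foldr .and b).Realize v ↔ b.Realize v ∧ ∀ ψ ∈ l, ψ.Realize v := by
  induction l with
  | nil => simp
  | cons h t ih =>
    simp only [List.foldr_cons, List.mem_cons]
    constructor
    · rintro ⟨h1, h2⟩
      rw [ih] at h2
      exact ⟨h2.1, fun ψ hψ => hψ.elim (fun e => e ▸ h1) (h2.2 ψ)⟩
    · rintro ⟨h1, h2⟩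
      exact ⟨h2 h (Or.inl rfl), ih.2 ⟨h1, fun ψ hψ => h2 ψ (Or.inr hψ)⟩⟩

end PosForm

theorem pos_transfer {A : Type w} {B : Type w'} [L.Structure A] [L.Structure B]
    (hB : HModels B (TuStarInd (L := L) A)) {φ : PosForm L 0}
    (h : PosRealize B φ) : PosRealize A φ := by
  by_contra hA
  exact hB _ ⟨φ, hA, rfl⟩ Fin.elim0 h

theorem nonempty_of_nonempty {A : Type w} {B : Type w'} [L.Structure A] [L.Structure B]
    (hB : HModels B (TuStarInd (L := L) A)) (hN : Nonempty B) : Nonempty A := by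
  have h : PosRealize B (PosForm.ex (PosForm.equal (L := L) (Term.var 0) (Term.var 0))) :=
    PosForm.realize_ex.2 ⟨hN.some, PosForm.realize_equal.2 rfl⟩
  obtain ⟨x, -⟩ := PosForm.realize_ex.1 (pos_transfer hB h)
  exact ⟨x⟩

end Part1
section Part2

universe w2

variable {L : FirstOrder.Language.{u, v}}

theorem conj_aux {ι : Type*} [Fintype ι] [Nonempty ι] {ns : ι → ℕ}
    (φs : ∀ i, PosForm L (ns i)) {m : ℕ} (σ : ∀ i, Fin (ns i) → Fin m)
    (M : Type w2) [L.Structure M] (v : Fin m → M) :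
    (((Finset.univ.toList (α := ι)).map fun i => (φs i).relabel (σ i)).foldr .and
        ((φs (Classical.arbitrary ι)).relabel (σ (Classical.arbitrary ι)))).Realize v ↔
      ∀ i, (φs i).Realize (v ∘ σ i) := by
  rw [PosForm.realize_foldr_and]
  constructor
  · rintro ⟨-, h2⟩ i
    have := h2 _ (List.mem_map_of_mem (Finset.mem_toList.2 (Finset.mem_univ i)))
    rwa [PosForm.realize_relabel] at this
  · intro hall
    refine ⟨(PosForm.realize_relabel _ _ _).2 (hall _), ?_⟩
    rintro ψ hψ
    obtain ⟨i, -, rfl⟩ := List.mem_map.1 hψ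
    exact (PosForm.realize_relabel _ _ _).2 (hall i)

theorem transfer {A : Type w} {B : Type w'} [L.Structure A] [L.Structure B]
    (hA : Nonempty A) (hB : HModels B (TuStarInd (L := L) A))
    {ι : Type*} [Fintype ι] {ns : ι → ℕ} (φs : ∀ i, PosForm L (ns i))
    (bs : ∀ i, Fin (ns i) → B) (h : ∀ i, (φs i).Realize (bs i)) :
    ∃ g : B → A, ∀ i, (φs i).Realize (g ∘ bs i) := by
  classical
  rcases isEmpty_or_nonempty ι with hι | hι
  · exact ⟨fun _ => hA.some, fun i => isEmptyElim i⟩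
  · set S : Finset B := Finset.univ.biUnion fun i => Finset.image (bs i) Finset.univ with hS
    have memS : ∀ i j, bs i j ∈ S := fun i j =>
      Finset.mem_biUnion.2 ⟨i, Finset.mem_univ _,
        Finset.mem_image_of_mem _ (Finset.mem_univ _)⟩
    let e : {x // x ∈ S} ≃ Fin S.card := S.equivFin
    let σ : ∀ i, Fin (ns i) → Fin S.card := fun i j => e ⟨bs i j, memS i j⟩
    let Ψ : PosForm L S.card :=
      ((Finset.univ.toList (α := ι)).map fun i => (φs i).relabel (σ i)).foldr .and
        ((φs (Classical.arbitrary ι)).relabel (σ (Classical.arbitrary ι)))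
    have hBΦ : PosRealize B Ψ.exs := by
      refine (PosForm.realize_exs _).2 ⟨fun m => (e.symm m).1, (conj_aux φs σ B _).2 fun i => ?_⟩
      have : (fun m => (e.symm m).1) ∘ σ i = bs i := by
        funext j
        show (e.symm (e ⟨bs i j, memS i j⟩)).1 = bs i j
        rw [Equiv.symm_apply_apply]
      rw [this]
      exact h i
    obtain ⟨a, ha⟩ := (PosForm.realize_exs _).1 (pos_transfer hB hBΦ)
    refine ⟨fun b => if hb : b ∈ S then a (e ⟨b, hb⟩) else hA.some, fun i => ?_⟩
    have := (conj_aux φs σ A a).1 ha i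
    have heq : (fun b => if hb : b ∈ S then a (e ⟨b, hb⟩) else hA.some) ∘ bs i = a ∘ σ i := by
      funext j
      simp only [Function.comp_apply, dif_pos (memS i j)]
      rfl
    rwa [heq]

end Part2
section Part3

variable {L : FirstOrder.Language.{u, v}}

namespace PosForm

/-- Translation of a positive formula into a bounded first-order formula. -/
def toBF : ∀ {n : ℕ}, PosForm L n → L.BoundedFormula Empty n
  | _, .falsum => ⊥
  | _, .equal t u => (t.relabel Sum.inr).bdEqual (u.relabel Sum.inr)
  | _, .rel R ts => R.boundedFormula fun i => (ts i).relabel Sum.inr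
  | _, .and φ ψ => toBF φ ⊓ toBF ψ
  | _, .or φ ψ => toBF φ ⊔ toBF ψ
  | _, .ex φ => (toBF φ).ex

variable {M : Type w} [L.Structure M]

theorem realize_toBF : ∀ {n : ℕ} (φ : PosForm L n) (v : Empty → M) (xs : Fin n → M),
    (toBF φ).Realize v xs ↔ φ.Realize xs
  | _, .falsum, v, xs => by simp [toBF]
  | _, .equal t u, v, xs => by
    simp [toBF, BoundedFormula.realize_bdEqual, Term.realize_relabel]
  | _, .rel R ts, v, xs => by
    simp [toBF, BoundedFormula.realize_rel, Term.realize_relabel]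
  | _, .and φ ψ, v, xs => by
    simp [toBF, BoundedFormula.realize_inf, realize_toBF φ, realize_toBF ψ]
  | _, .or φ ψ, v, xs => by
    simp [toBF, BoundedFormula.realize_sup, realize_toBF φ, realize_toBF ψ]
  | _, .ex φ, v, xs => by
    simp [toBF, BoundedFormula.realize_ex, realize_toBF φ]

end PosForm

variable {γ : Type u'} {M : Type w} [L.Structure M]

/-- The formula (with variables in `γ`) expressing a positive fact about parameters. -/
def diagFormula {n : ℕ} (φ : PosForm L n) (b : Fin n → γ) : L.Formula γ :=
  ((PosForm.toBF φ).toFormula).relabel (Sum.elim (fun e => e.elim) b)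

theorem realize_diagFormula {n : ℕ} (φ : PosForm L n) (b : Fin n → γ) (v : γ → M) :
    (diagFormula φ b).Realize v ↔ φ.Realize (v ∘ b) := by
  rw [diagFormula, Formula.realize_relabel, BoundedFormula.realize_toFormula,
    PosForm.realize_toBF]
  rfl

/-- The sentence (as a formula with variables in `γ`) associated to a basic
h-inductive sentence. -/
def hindFormula (s : HInd L) : L.Formula γ :=
  ((PosForm.toBF s.hyp ⟹ PosForm.toBF s.concl).alls).relabel (fun e => e.elim)

theorem realize_hindFormula (s : HInd L) (v : γ → M) :
    (hindFormula s).Realize v ↔ s.Realize M := by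
  rw [hindFormula, Formula.realize_relabel, BoundedFormula.realize_alls]
  constructor
  · intro h w hw
    have := h w
    rw [BoundedFormula.realize_imp, PosForm.realize_toBF, PosForm.realize_toBF] at this
    exact this hw
  · intro h w
    rw [BoundedFormula.realize_imp, PosForm.realize_toBF, PosForm.realize_toBF]
    exact h w

end Part3
section Part4

variable {L : FirstOrder.Language.{u, v}}

/-- Hom from an empty model of `T_u*(A)` into `A`. -/
noncomputable def emptyHom {A : Type w} {B : Type w'} [L.Structure A] [L.Structure B]
    (hB : HModels B (TuStarInd (L := L) A)) (h : IsEmpty B) : B →[L] A where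
  toFun := h.elim
  map_fun' := by
    intro n f x
    exact isEmptyElim (Structure.funMap f x)
  map_rel' := by
    intro n r x hr
    cases n with
    | zero =>
      have hBr : PosRealize B (PosForm.rel (n := 0) r Fin.elim0) :=
        Eq.mp (congrArg (Structure.RelMap r) (Subsingleton.elim _ _)) hr
      have hAr := pos_transfer hB hBr
      exact Eq.mp (congrArg (Structure.RelMap r) (Subsingleton.elim _ _)) hAr
    | succ n => exact isEmptyElim (x 0)

theorem continuation (A B C : Type (max u v)) [L.Structure A] [L.Structure B] [L.Structure C]
    (hB : HModels B (TuStarInd (L := L) A)) (hC : HModels C (TuStarInd (L := L) A)) :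
    ∃ (D : Type (max u v)) (_ : L.Structure D), HModels D (TiStar (L := L) A) ∧
      Nonempty (B →[L] D) ∧ Nonempty (C →[L] D) := by
  classical
  by_cases hA : Nonempty A
  case neg =>
    have hBe : IsEmpty B := not_nonempty_iff.1 fun hN => hA (nonempty_of_nonempty hB hN)
    have hCe : IsEmpty C := not_nonempty_iff.1 fun hN => hA (nonempty_of_nonempty hC hN)
    exact ⟨A, ‹_›, fun s hs => by exact hs, ⟨emptyHom hB hBe⟩, ⟨emptyHom hC hCe⟩⟩
  case pos =>
    let T1 : Set (L.Formula (B ⊕ C)) := hindFormula '' TiStar (L := L) A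
    let T2 : Set (L.Formula (B ⊕ C)) :=
      {f | ∃ (n : ℕ) (φ : PosForm L n) (b : Fin n → B),
        φ.Realize b ∧ f = diagFormula φ (Sum.inl ∘ b)}
    let T3 : Set (L.Formula (B ⊕ C)) :=
      {f | ∃ (n : ℕ) (φ : PosForm L n) (b : Fin n → C),
        φ.Realize b ∧ f = diagFormula φ (Sum.inr ∘ b)}
    let T' : L[[B ⊕ C]].Theory := Formula.equivSentence '' (T1 ∪ T2 ∪ T3)
    have sat : T'.IsSatisfiable := by
      rw [Theory.isSatisfiable_iff_isFinitelySatisfiable]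
      intro T0 hT0
      have hdataB : ∀ i : {s // s ∈ T0.filter fun s => s ∈ Formula.equivSentence '' T2},
          ∃ (n : ℕ) (φ : PosForm L n) (b : Fin n → B), φ.Realize b ∧
            (i : L[[B ⊕ C]].Sentence) = Formula.equivSentence (diagFormula φ (Sum.inl ∘ b)) := by
        rintro ⟨s, hs⟩
        obtain ⟨-, f, ⟨n, φ, b, hre, rfl⟩, hfe⟩ := Finset.mem_filter.1 hs
        exact ⟨n, φ, b, hre, hfe.symm⟩
      have hdataC : ∀ i : {s // s ∈ T0.filter fun s => s ∈ Formula.equivSentence '' T3},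
          ∃ (n : ℕ) (φ : PosForm L n) (b : Fin n → C), φ.Realize b ∧
            (i : L[[B ⊕ C]].Sentence) = Formula.equivSentence (diagFormula φ (Sum.inr ∘ b)) := by
        rintro ⟨s, hs⟩
        obtain ⟨-, f, ⟨n, φ, b, hre, rfl⟩, hfe⟩ := Finset.mem_filter.1 hs
        exact ⟨n, φ, b, hre, hfe.symm⟩
      choose nB φB bB hrealB heqB using hdataB
      choose nC φC bC hrealC heqC using hdataC
      obtain ⟨gB, hgB⟩ := transfer hA hB φB bB hrealB
      obtain ⟨gC, hgC⟩ := transfer hA hC φC bC hrealC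
      letI cs : (constantsOn (B ⊕ C)).Structure A := constantsOn.structure (Sum.elim gB gC)
      letI : L[[B ⊕ C]].Structure A := L.withConstantsStructure (B ⊕ C)
      have hcon : ∀ a : B ⊕ C, ((L.con a : L[[B ⊕ C]].Constants) : A) = Sum.elim gB gC a :=
        fun a => rfl
      haveI : A ⊨ (T0 : L[[B ⊕ C]].Theory) := by
        rw [Theory.model_iff]
        intro ψ hψ
        obtain ⟨f, hf, rfl⟩ := hT0 hψ
        rcases hf with (hf1 | hf2) | hf3
        · obtain ⟨s, hsTi, rfl⟩ := hf1
          rw [Formula.realize_equivSentence]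
          exact (realize_hindFormula s _).2 (show s.Realize A from hsTi)
        · set i : {s // s ∈ T0.filter fun s => s ∈ Formula.equivSentence '' T2} :=
            ⟨_, Finset.mem_filter.2 ⟨hψ, Set.mem_image_of_mem _ hf2⟩⟩ with hi
          have heq := heqB i
          rw [Formula.equivSentence.injective.eq_iff] at heq
          rw [heq, Formula.realize_equivSentence, realize_diagFormula]
          have : (fun a : B ⊕ C => ((L.con a : L[[B ⊕ C]].Constants) : A)) ∘ Sum.inl ∘ bB i
              = gB ∘ bB i := by
            funext j; exact hcon _
          rw [this]
          exact hgB i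
        · set i : {s // s ∈ T0.filter fun s => s ∈ Formula.equivSentence '' T3} :=
            ⟨_, Finset.mem_filter.2 ⟨hψ, Set.mem_image_of_mem _ hf3⟩⟩ with hi
          have heq := heqC i
          rw [Formula.equivSentence.injective.eq_iff] at heq
          rw [heq, Formula.realize_equivSentence, realize_diagFormula]
          have : (fun a : B ⊕ C => ((L.con a : L[[B ⊕ C]].Constants) : A)) ∘ Sum.inr ∘ bC i
              = gC ∘ bC i := by
            funext j; exact hcon _
          rw [this]
          exact hgC i
      exact Theory.Model.isSatisfiable A
    obtain ⟨MT⟩ := sat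
    let D := MT.Carrier
    letI : L.Structure D := (L.lhomWithConstants (B ⊕ C)).reduct D
    haveI : (L.lhomWithConstants (B ⊕ C)).IsExpansionOn D :=
      LHom.isExpansionOn_reduct _ D
    have hsent : ∀ f ∈ T1 ∪ T2 ∪ T3,
        f.Realize (fun a : B ⊕ C => ((L.con a : L[[B ⊕ C]].Constants) : D)) := by
      intro f hf
      have : D ⊨ Formula.equivSentence f :=
        Theory.realize_sentence_of_mem T' (Set.mem_image_of_mem _ hf)
      rwa [Formula.realize_equivSentence] at this
    refine ⟨D, inferInstance, ?_, ⟨?_⟩, ⟨?_⟩⟩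
    · intro s hs
      exact (realize_hindFormula s _).1 (hsent _ (Or.inl (Or.inl ⟨s, hs, rfl⟩)))
    · refine ⟨fun b => ((L.con (Sum.inl b) : L[[B ⊕ C]].Constants) : D), ?_, ?_⟩
      · intro n f x
        let φf : PosForm L (n + 1) :=
          .equal (Term.func f fun i => Term.var i.castSucc) (Term.var (Fin.last n))
        have hreal : φf.Realize (Fin.snoc x (Structure.funMap f x)) := by
          show Structure.funMap f _ = _
          simp [Fin.snoc_castSucc, Fin.snoc_last]
        have hfact := hsent _ (Or.inl (Or.inr
          ⟨n + 1, φf, Fin.snoc x (Structure.funMap f x), hreal, rfl⟩))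
        rw [realize_diagFormula] at hfact
        simp only [φf, PosForm.realize_equal, Term.realize, Function.comp_apply,
          Fin.snoc_castSucc, Fin.snoc_last] at hfact
        exact hfact.symm
      · intro n r x hr
        let φr : PosForm L n := .rel r Term.var
        have hfact := hsent _ (Or.inl (Or.inr ⟨n, φr, x, hr, rfl⟩))
        rw [realize_diagFormula] at hfact
        exact hfact
    · refine ⟨fun c => ((L.con (Sum.inr c) : L[[B ⊕ C]].Constants) : D), ?_, ?_⟩
      · intro n f x
        let φf : PosForm L (n + 1) :=
          .equal (Term.func f fun i => Term.var i.castSucc) (Term.var (Fin.last n))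
        have hreal : φf.Realize (Fin.snoc x (Structure.funMap f x)) := by
          show Structure.funMap f _ = _
          simp [Fin.snoc_castSucc, Fin.snoc_last]
        have hfact := hsent _ (Or.inr
          ⟨n + 1, φf, Fin.snoc x (Structure.funMap f x), hreal, rfl⟩)
        rw [realize_diagFormula] at hfact
        simp only [φf, PosForm.realize_equal, Term.realize, Function.comp_apply,
          Fin.snoc_castSucc, Fin.snoc_last] at hfact
        exact hfact.symm
      · intro n r x hr
        let φr : PosForm L n := .rel r Term.var
        have hfact := hsent _ (Or.inr ⟨n, φr, x, hr, rfl⟩)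
        rw [realize_diagFormula] at hfact
        exact hfact

end Part4
section Part5

variable {L : FirstOrder.Language.{u, v}}

theorem tuStarInd_subset {A : Type w} [L.Structure A] :
    TuStarInd (L := L) A ⊆ TiStar (L := L) A := by
  rintro s ⟨φ, hφ, rfl⟩
  intro v hv
  refine hφ ?_
  show φ.Realize (Fin.elim0 : Fin 0 → A)
  rw [Subsingleton.elim (Fin.elim0 : Fin 0 → A) v]
  exact hv

theorem self_models_tuStarInd {A : Type w} [L.Structure A] :
    HModels A (TuStarInd (L := L) A) := by
  rintro s ⟨φ, hφ, rfl⟩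
  intro v hv
  refine hφ ?_
  show φ.Realize (Fin.elim0 : Fin 0 → A)
  rw [Subsingleton.elim (Fin.elim0 : Fin 0 → A) v]
  exact hv

end Part5
/-- `T_u*(A)` and `T_i*(A)` are companions: they have the same pc
models, every model of `T_u*(A)` continues into a model of `T_i*(A)`, and both
have the joint continuation property. -/
theorem TuStar_TiStar_companions (A : Type (max u v)) [L.Structure A] :
    (∀ (M : Type (max u v)) [L.Structure M], IsPC (TuStarInd (L := L) A) M ↔ IsPC (TiStar (L := L) A) M) ∧
    (∀ (B : Type (max u v)) [L.Structure B], HModels B (TuStarInd (L := L) A) →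
        ∃ (D : Type (max u v)) (_ : L.Structure D),
          HModels D (TiStar (L := L) A) ∧ Nonempty (B →[L] D)) ∧
    JCP (TuStarInd (L := L) A) ∧ JCP (TiStar (L := L) A) := by
  classical
  have hsub : TuStarInd (L := L) A ⊆ TiStar (L := L) A := tuStarInd_subset
  have hAu : HModels A (TuStarInd (L := L) A) := self_models_tuStarInd
  have cont : ∀ (B : Type (max u v)) [L.Structure B], HModels B (TuStarInd (L := L) A) →
      ∃ (D : Type (max u v)) (_ : L.Structure D),
        HModels D (TiStar (L := L) A) ∧ Nonempty (B →[L] D) := by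
    intro B _ hB
    obtain ⟨D, iD, hD, hBD, -⟩ := continuation A B A hB hAu
    exact ⟨D, iD, hD, hBD⟩
  refine ⟨?_, cont, ?_, ?_⟩
  · intro M iM
    constructor
    · rintro ⟨hMu, hpc⟩
      obtain ⟨D, iD, hD, ⟨f⟩⟩ := cont M hMu
      have hDu : HModels D (TuStarInd (L := L) A) := fun s hs => hD s (hsub hs)
      have himm : IsImmersion f := hpc D hDu f
      constructor
      · intro s hs v hv
        have h1 := PosForm.realize_hom f s.hyp v hv
        have h2 := hD s hs _ h1
        exact (himm s.concl v).2 h2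
      · intro N iN hN g
        exact hpc N (fun s hs => hN s (hsub hs)) g
    · rintro ⟨hMt, hpc⟩
      refine ⟨fun s hs => hMt s (hsub hs), ?_⟩
      intro N iN hN f
      obtain ⟨D, iD, hD, ⟨g⟩⟩ := cont N hN
      have himm : IsImmersion (g.comp f) := hpc D hD (g.comp f)
      intro n φ v
      constructor
      · exact PosForm.realize_hom f φ v
      · intro h
        have h1 := PosForm.realize_hom g φ _ h
        exact (himm φ v).2 h1
  · intro B iB C iC hB hC
    obtain ⟨D, iD, hD, hBD, hCD⟩ := continuation A B C hB hC
    exact ⟨D, iD, fun s hs => hD s (hsub hs), hBD, hCD⟩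
  · intro B iB C iC hB hC
    obtain ⟨D, iD, hD, hBD, hCD⟩ :=
      continuation A B C (fun s hs => hB s (hsub hs)) (fun s hs => hC s (hsub hs))
    exact ⟨D, iD, hD, hBD, hCD⟩
end PositiveLogic
end

section
/- Let T be an h-inductive theory and A a pc model of T. Then every pc model of the theory T_i*(A) is a pc model of T, and every pc model of T that models T_i*(A) is a pc model of T_i*(A). -/
open FirstOrder FirstOrder.Language

universe u v w w'

namespace PositiveLogic

variable {L : FirstOrder.Language.{u, v}}

/-! ### Auxiliary development -/

section Aux

attribute [local instance] Classical.propDecidable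

open Structure Filter

/-- Homomorphisms preserve positive formulas. -/
theorem realize_hom {A : Type w} {B : Type w'} [L.Structure A] [L.Structure B]
    (f : A →[L] B) : ∀ {n : ℕ} (φ : PosForm L n) (v : Fin n → A),
    φ.Realize v → φ.Realize (⇑f ∘ v) := by
  intro n φ
  induction φ with
  | falsum => exact fun v h => h.elim
  | equal t u =>
    intro v h
    simp only [PosForm.Realize] at h ⊢
    simp [h]
  | rel R ts =>
    intro v h
    simp only [PosForm.Realize] at h ⊢
    have h2 := Hom.map_rel f R (fun j => (ts j).realize v) h
    have h3 : (fun j => (ts j).realize (⇑f ∘ v)) = ⇑f ∘ fun j => (ts j).realize v := by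
      funext j; simp
    rw [h3]; exact h2
  | and φ ψ ihφ ihψ =>
    intro v h
    simp only [PosForm.Realize] at h ⊢
    exact ⟨ihφ v h.1, ihψ v h.2⟩
  | or φ ψ ihφ ihψ =>
    intro v h
    simp only [PosForm.Realize] at h ⊢
    exact h.elim (fun h => Or.inl (ihφ v h)) fun h => Or.inr (ihψ v h)
  | ex φ ih =>
    intro v h
    simp only [PosForm.Realize] at h ⊢
    obtain ⟨x, hx⟩ := h
    exact ⟨f x, by rw [← Fin.comp_snoc]; exact ih _ hx⟩

/-- Positive sentences true in a model of `TiStar A` are true in `A`. -/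
theorem pos_le_of_models {A : Type w} {B : Type w'} [L.Structure A] [L.Structure B]
    (hB : HModels B (TiStar (L := L) A)) (σ : PosForm L 0) (h : PosRealize B σ) :
    PosRealize A σ := by
  by_contra hA
  have hs : HInd.Realize ⟨0, σ, PosForm.falsum⟩ A := by
    intro v hv
    exact (hA (by rwa [show v = (Fin.elim0 : Fin 0 → A) from funext fun j => j.elim0] at hv)).elim
  exact hB ⟨0, σ, PosForm.falsum⟩ hs Fin.elim0 h

/-- Positive sentences true in `A` are true in any nonempty model of `TiStar A`. -/
theorem pos_ge_of_models {A : Type w} {B : Type w'} [L.Structure A] [L.Structure B]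
    (hB : HModels B (TiStar (L := L) A)) (hne : Nonempty B)
    (σ : PosForm L 0) (h : PosRealize A σ) : PosRealize B σ := by
  have hs : HInd.Realize ⟨0, PosForm.ex (.equal (Term.var 0) (Term.var 0)), σ⟩ A := by
    intro v _
    rwa [show v = (Fin.elim0 : Fin 0 → A) from funext fun j => j.elim0]
  obtain ⟨b⟩ := hne
  exact hB _ hs Fin.elim0 ⟨b, rfl⟩

/-- From an empty model of `TiStar A` there is a homomorphism into `A`. -/
theorem hom_of_empty {A : Type w} {B : Type w'} [L.Structure A] [L.Structure B]
    (hB : HModels B (TiStar (L := L) A)) (he : IsEmpty B) : Nonempty (B →[L] A) := by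
  refine ⟨⟨fun b => he.elim' b, ?_, ?_⟩⟩
  · intro n f x
    exact he.elim' (Structure.funMap f x)
  · intro n r x hx
    rcases isEmpty_or_nonempty (Fin n) with hn | hj
    · have hσB : PosRealize B (PosForm.rel r fun j => (hn.elim' j : L.Term (Fin 0))) := by
        simp only [PosRealize, PosForm.Realize]
        have h1 : (fun j => Term.realize (Fin.elim0 : Fin 0 → B) (hn.elim' j : L.Term (Fin 0))) = x :=
          funext fun j => hn.elim' j
        rw [h1]; exact hx
      have hσA := pos_le_of_models hB _ hσB
      simp only [PosRealize, PosForm.Realize] at hσA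
      have h2 : (fun j => Term.realize (Fin.elim0 : Fin 0 → A) (hn.elim' j : L.Term (Fin 0)))
          = ((fun b => he.elim' b) ∘ x) := funext fun j => hn.elim' j
      rw [← h2]; exact hσA
    · obtain ⟨j⟩ := hj
      exact he.elim' (x j)

/-! #### Łoś's theorem for positive formulas -/

section Los

variable {I : Type*} (U : Ultrafilter I) (M : Type*) [L.Structure M]

theorem realize_prod : ∀ {n : ℕ} (φ : PosForm L n) (v : Fin n → (I → M)),
    (PosForm.Realize (M := (U : Filter I).Product fun _ => M) φ
        (fun j => (v j : (U : Filter I).Product fun _ => M))) ↔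
      ∀ᶠ i in (U : Filter I), φ.Realize fun j => v j i := by
  intro n φ
  induction φ with
  | falsum =>
    intro v
    simp only [PosForm.Realize, Filter.eventually_const]
  | equal t u =>
    intro v
    simp only [PosForm.Realize]
    erw [Ultraproduct.term_realize_cast, Ultraproduct.term_realize_cast]
    exact Quotient.eq''
  | rel R ts =>
    intro v
    simp only [PosForm.Realize]
    conv_lhs => enter [2, j]; erw [Ultraproduct.term_realize_cast]
    exact relMap_quotient_mk' _ _ _
  | and φ ψ ihφ ihψ =>
    intro v
    simp only [PosForm.Realize, ihφ, ihψ, eventually_and]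
  | or φ ψ ihφ ihψ =>
    intro v
    simp only [PosForm.Realize, ihφ, ihψ]
    exact (Ultrafilter.eventually_or).symm
  | ex φ ih =>
    intro v
    have hsnoc : ∀ w : I → M,
        (fun j => (((Fin.snoc v w : Fin _ → I → M) j) : (U : Filter I).Product fun _ => M)) =
          Fin.snoc (fun j => ((v j : I → M) : (U : Filter I).Product fun _ => M))
            ((w : I → M) : (U : Filter I).Product fun _ => M) := by
      intro w
      funext j
      refine Fin.lastCases ?_ (fun j => ?_) j
      · simp only [Fin.snoc_last]
      · simp only [Fin.snoc_castSucc]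
    have hpt : ∀ (w : I → M) (i : I),
        (fun j => (Fin.snoc v w : Fin _ → I → M) j i) = Fin.snoc (fun j => v j i) (w i) := by
      intro w i
      funext j
      refine Fin.lastCases ?_ (fun j => ?_) j
      · simp only [Fin.snoc_last]
      · simp only [Fin.snoc_castSucc]
    simp only [PosForm.Realize]
    constructor
    · rintro ⟨x, hx⟩
      obtain ⟨w, rfl⟩ := Quotient.exists_rep x
      erw [show (⟦w⟧ : (U : Filter I).Product fun _ => M) =
        ((w : I → M) : (U : Filter I).Product fun _ => M) from rfl, ← hsnoc w] at hx
      rw [ih (Fin.snoc v w)] at hx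
      refine hx.mono fun i hi => ⟨w i, ?_⟩
      rwa [hpt w i] at hi
    · intro h
      haveI hne : Nonempty M := by
        obtain ⟨i, hi⟩ := h.exists
        exact ⟨hi.choose⟩
      haveI : Inhabited M := Classical.inhabited_of_nonempty hne
      set w : I → M := fun i =>
        if hi : ∃ x : M, φ.Realize (Fin.snoc (fun j => v j i) x) then hi.choose
        else default with hwdef
      have hev : ∀ᶠ i in (U : Filter I), φ.Realize fun j => (Fin.snoc v w : Fin _ → I → M) j i := by
        refine h.mono fun i hi => ?_
        rw [hpt w i]
        have : w i = hi.choose := by rw [hwdef]; simp only [dif_pos hi]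
        rw [this]
        exact hi.choose_spec
      have := (ih (Fin.snoc v w)).2 hev
      rw [hsnoc w] at this
      exact ⟨_, this⟩

theorem hind_prod (s : HInd L) (hs : s.Realize M) :
    s.Realize ((U : Filter I).Product fun _ => M) := by
  intro v hv
  have hrep : ∀ j, ∃ y : I → M, ((y : I → M) : (U : Filter I).Product fun _ => M) = v j :=
    fun j => Quotient.exists_rep (v j)
  choose g hg using hrep
  have hv' : v = fun j => ((g j : I → M) : (U : Filter I).Product fun _ => M) :=
    funext fun j => (hg j).symm
  rw [hv'] at hv ⊢
  rw [realize_prod] at hv ⊢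
  exact hv.mono fun i hi => hs _ hi

theorem pos_prod (σ : PosForm L 0) :
    PosRealize M σ ↔ PosRealize ((U : Filter I).Product fun _ => M) σ := by
  have h := realize_prod (L := L) U M σ (Fin.elim0 : Fin 0 → (I → M))
  have e1 : (fun j : Fin 0 => ((Fin.elim0 j : I → M) : (U : Filter I).Product fun _ => M))
      = (Fin.elim0 : Fin 0 → (U : Filter I).Product fun _ => M) := funext fun j => j.elim0
  have e2 : ∀ i : I, (fun j : Fin 0 => (Fin.elim0 : Fin 0 → (I → M)) j i)
      = (Fin.elim0 : Fin 0 → M) := fun i => funext fun j => j.elim0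
  rw [e1] at h
  simp only [e2] at h
  rw [Filter.eventually_const] at h
  exact h.symm

end Los

/-! #### Iterated existential closure -/

/-- Iterated existential quantification down to a sentence. -/
def PosForm.exs_s14 : ∀ {m : ℕ}, PosForm L m → PosForm L 0
  | 0, φ => φ
  | _ + 1, φ => PosForm.exs_s14 φ.ex

theorem realize_exs {Q : Type w} [L.Structure Q] :
    ∀ {m : ℕ} (φ : PosForm L m), PosRealize Q φ.exs_s14 ↔ ∃ w : Fin m → Q, φ.Realize w := by
  intro m
  induction m with
  | zero =>
    intro φ
    constructor
    · exact fun h => ⟨Fin.elim0, h⟩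
    · rintro ⟨w, hw⟩
      rwa [show w = (Fin.elim0 : Fin 0 → Q) from funext fun j => j.elim0] at hw
  | succ m ih =>
    intro φ
    rw [show (PosForm.exs_s14 φ) = PosForm.exs_s14 φ.ex from rfl, ih]
    constructor
    · rintro ⟨w, x, hx⟩
      exact ⟨Fin.snoc w x, hx⟩
    · rintro ⟨w, hw⟩
      exact ⟨Fin.init w, w (Fin.last m), by rwa [Fin.snoc_init_self]⟩

/-! #### Atomic facts and the continuation construction -/

/-- Atomic facts about a structure `P`, used to build homomorphisms out of `P`. -/
inductive Fact (L : FirstOrder.Language.{u, v}) (P : Type w) [L.Structure P] :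
    Type (max u v w)
  | fn {l : ℕ} (f : L.Functions l) (x : Fin l → P) : Fact L P
  | rl {l : ℕ} (R : L.Relations l) (x : Fin l → P) (h : Structure.RelMap R x) : Fact L P

/-- A map `h : P → M` satisfies an atomic fact. -/
def Fact.Holds {P : Type w} {M : Type w'} [L.Structure P] [L.Structure M] (h : P → M) :
    Fact L P → Prop
  | .fn f x => h (Structure.funMap f x) = Structure.funMap f (h ∘ x)
  | .rl R x _ => Structure.RelMap R (h ∘ x)

/-- The elements of `P` mentioned in a fact. -/
noncomputable def Fact.elems {P : Type w} [L.Structure P] : Fact L P → Finset P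
  | .fn f x => insert (Structure.funMap f x) (Finset.univ.image x)
  | .rl _ x _ => Finset.univ.image x

variable {P : Type (max u v)} [L.Structure P]

/-- Indexing of the elements mentioned in a finite set of facts (with one dummy index). -/
noncomputable def factIdx (i : Finset (Fact L P)) (p : P) :
    Fin ((i.sup Fact.elems).card + 1) :=
  if h : p ∈ i.sup Fact.elems then ((i.sup Fact.elems).equivFin ⟨p, h⟩).castSucc
  else Fin.last _

/-- The positive formula expressing a single fact. -/
noncomputable def factForm (i : Finset (Fact L P)) :
    Fact L P → PosForm L ((i.sup Fact.elems).card + 1)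
  | .fn f x => .equal (Term.func f fun j => Term.var (factIdx i (x j)))
      (Term.var (factIdx i (Structure.funMap f x)))
  | .rl R x _ => .rel R fun j => Term.var (factIdx i (x j))

/-- The conjunction of the positive formulas of a finite set of facts. -/
noncomputable def factConj (i : Finset (Fact L P)) :
    PosForm L ((i.sup Fact.elems).card + 1) :=
  (i.toList.map (factForm i)).foldr PosForm.and
    (.equal (Term.var (Fin.last _)) (Term.var (Fin.last _)))

theorem factForm_realize {Q : Type w} [L.Structure Q] (i : Finset (Fact L P)) (t : Fact L P)
    (w : Fin ((i.sup Fact.elems).card + 1) → Q) :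
    (factForm i t).Realize w ↔ t.Holds (fun p => w (factIdx i p)) := by
  cases t with
  | fn f x =>
    simp only [factForm, PosForm.Realize, Term.realize, Fact.Holds, Function.comp_def]
    exact eq_comm
  | rl R x h =>
    simp only [factForm, PosForm.Realize, Term.realize, Fact.Holds, Function.comp_def]

theorem factConj_realize {Q : Type w} [L.Structure Q] (i : Finset (Fact L P))
    (w : Fin ((i.sup Fact.elems).card + 1) → Q) :
    (factConj i).Realize w ↔ ∀ t ∈ i, (factForm i t).Realize w := by
  have key : ∀ lst : List (Fact L P),
      ((lst.map (factForm i)).foldr PosForm.and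
        (.equal (Term.var (Fin.last _)) (Term.var (Fin.last _))) :
          PosForm L ((i.sup Fact.elems).card + 1)).Realize w ↔
        ∀ t ∈ lst, (factForm i t).Realize w := by
    intro lst
    induction lst with
    | nil => simp [PosForm.Realize, Term.realize]
    | cons a as ih => simp [PosForm.Realize, ih, List.forall_mem_cons]
  rw [factConj, key i.toList]
  simp [Finset.mem_toList]

theorem exists_factMap {M : Type (max u v)} [L.Structure M]
    (hpos : ∀ σ : PosForm L 0, PosRealize P σ → PosRealize M σ) (p₀ : P)
    (i : Finset (Fact L P)) : ∃ h : P → M, ∀ t ∈ i, t.Holds h := by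
  have hmem : ∀ t ∈ i, ∀ p ∈ Fact.elems t, p ∈ i.sup Fact.elems :=
    fun t ht p hp => Finset.mem_sup.2 ⟨t, ht, hp⟩
  set wP : Fin ((i.sup Fact.elems).card + 1) → P :=
    Fin.snoc (fun j => ((i.sup Fact.elems).equivFin.symm j).1) p₀
    with hwP
  have hfix : ∀ p, p ∈ i.sup Fact.elems → wP (factIdx i p) = p := by
    intro p hp
    rw [hwP, factIdx, dif_pos hp, Fin.snoc_castSucc, Equiv.symm_apply_apply]
  have hP : PosRealize P (factConj i).exs_s14 := by
    rw [realize_exs]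
    refine ⟨wP, ?_⟩
    rw [factConj_realize]
    intro t ht
    rw [factForm_realize]
    cases t with
    | fn f x =>
      simp only [Fact.Holds, Function.comp_def]
      rw [hfix _ (hmem _ ht _ (Finset.mem_insert_self _ _))]
      congr 1
      funext j
      exact (hfix _ (hmem _ ht _
        (Finset.mem_insert_of_mem (Finset.mem_image_of_mem x (Finset.mem_univ j))))).symm
    | rl R x hR =>
      simp only [Fact.Holds, Function.comp_def]
      have : (fun j => wP (factIdx i (x j))) = x :=
        funext fun j => hfix _ (hmem _ ht _ (Finset.mem_image_of_mem x (Finset.mem_univ j)))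
      rw [this]; exact hR
  obtain ⟨w, hw⟩ := (realize_exs (Q := M) _).1 (hpos _ hP)
  refine ⟨fun p => w (factIdx i p), fun t ht => ?_⟩
  exact (factForm_realize i t w).1 ((factConj_realize i w).1 hw t ht)

/-- The continuation lemma: if every positive sentence of `P` holds in `M`, then `P` maps
homomorphically into a structure which is "h-inductively above" `M` and positively
equivalent to `M`. -/
theorem continuation_s14 (P' M : Type (max u v)) [L.Structure P'] [L.Structure M]
    (hpos : ∀ σ : PosForm L 0, PosRealize P' σ → PosRealize M σ) :
    ∃ (C : Type (max u v)) (_ : L.Structure C),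
      (∀ s : HInd L, s.Realize M → s.Realize C) ∧
      (∀ σ : PosForm L 0, PosRealize M σ ↔ PosRealize C σ) ∧
      Nonempty (P' →[L] C) := by
  rcases isEmpty_or_nonempty P' with he | hnp
  · refine ⟨M, ‹_›, fun s h => h, fun σ => Iff.rfl, ⟨⟨fun p => he.elim' p, ?_, ?_⟩⟩⟩
    · intro n f x
      exact he.elim' (Structure.funMap f x)
    · intro n r x hx
      rcases isEmpty_or_nonempty (Fin n) with hn | hj
      · have hσ : PosRealize P' (PosForm.rel r fun j => (hn.elim' j : L.Term (Fin 0))) := by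
          simp only [PosRealize, PosForm.Realize]
          have h1 : (fun j => Term.realize (Fin.elim0 : Fin 0 → P') (hn.elim' j : L.Term (Fin 0))) = x :=
            funext fun j => hn.elim' j
          rw [h1]; exact hx
        have hσM := hpos _ hσ
        simp only [PosRealize, PosForm.Realize] at hσM
        have h2 : (fun j => Term.realize (Fin.elim0 : Fin 0 → M) (hn.elim' j : L.Term (Fin 0)))
            = ((fun p => he.elim' p) ∘ x) := funext fun j => hn.elim' j
        rw [← h2]; exact hσM
      · obtain ⟨j⟩ := hj
        exact he.elim' (x j)
  · obtain ⟨p₀⟩ := hnp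
    haveI : (Filter.atTop : Filter (Finset (Fact L P'))).NeBot := Filter.atTop_neBot
    set U : Ultrafilter (Finset (Fact L P')) := Ultrafilter.of Filter.atTop with hU
    choose H hH using fun i : Finset (Fact L P') => exists_factMap (M := M) hpos p₀ i
    have factU : ∀ t : Fact L P', ∀ᶠ i in (U : Filter (Finset (Fact L P'))), t.Holds (H i) := by
      intro t
      have h1 : ∀ᶠ i in (Filter.atTop : Filter (Finset (Fact L P'))), t ∈ i :=
        Filter.eventually_atTop.2 ⟨{t}, fun i hi => Finset.singleton_subset_iff.1 hi⟩
      exact (Filter.Eventually.filter_mono (Ultrafilter.of_le Filter.atTop) h1).mono fun i hi => hH i t hi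
    refine ⟨(U : Filter (Finset (Fact L P'))).Product fun _ => M, inferInstance,
      fun s hs => hind_prod U M s hs, fun σ => pos_prod U M σ, ⟨⟨fun p =>
        ((fun i => H i p : (Finset (Fact L P')) → M) :
          (U : Filter (Finset (Fact L P'))).Product fun _ => M), ?_, ?_⟩⟩⟩
    · intro n f x
      show _ = Structure.funMap f fun j =>
        ((fun i => H i (x j) : (Finset (Fact L P')) → M) :
          (U : Filter (Finset (Fact L P'))).Product fun _ => M)
      rw [Ultraproduct.funMap_cast]
      apply Quotient.sound'
      exact (factU (Fact.fn f x)).mono fun i hi => hi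
    · intro n r x hx
      show Structure.RelMap r fun j =>
        ((fun i => H i (x j) : (Finset (Fact L P')) → M) :
          (U : Filter (Finset (Fact L P'))).Product fun _ => M)
      refine (relMap_quotient_mk' _ r _).2 ?_
      exact (factU (Fact.rl r x hx)).mono fun i hi => hi

end Aux

/-- pc models of `T_i*(A)` versus pc models of `T`, for a pc model
`A` of `T`. -/
theorem pc_of_TiStar (T : Set (HInd L)) (A : Type (max u v)) [L.Structure A]
    (hA : IsPC T A) :
    (∀ (B : Type (max u v)) [L.Structure B], IsPC (TiStar (L := L) A) B → IsPC T B) ∧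
    (∀ (B : Type (max u v)) [L.Structure B],
        IsPC T B → HModels B (TiStar (L := L) A) → IsPC (TiStar (L := L) A) B) := by
  obtain ⟨hAT, hApc⟩ := hA
  have hTsub : ∀ (Q : Type (max u v)) [L.Structure Q],
      HModels Q (TiStar (L := L) A) → HModels Q T :=
    fun Q _ hQ s hs => hQ s (hAT s hs)
  constructor
  · intro B _ hB
    obtain ⟨hBTi, hBpc⟩ := hB
    refine ⟨hTsub B hBTi, ?_⟩
    intro N _ hN f
    have posBA : ∀ σ : PosForm L 0, PosRealize B σ → PosRealize A σ :=
      fun σ => pos_le_of_models hBTi σ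
    have posBN : ∀ σ : PosForm L 0, PosRealize B σ → PosRealize N σ := by
      intro σ h
      have h1 := realize_hom f σ Fin.elim0 h
      rwa [show (⇑f ∘ Fin.elim0) = (Fin.elim0 : Fin 0 → N)
        from funext fun j => j.elim0] at h1
    have posAN : ∀ σ : PosForm L 0, PosRealize A σ → PosRealize N σ := by
      rcases isEmpty_or_nonempty B with he | hne
      · obtain ⟨g0⟩ := hom_of_empty hBTi he
        have him : IsImmersion g0 := hBpc A (fun s hs => hs) g0
        intro σ h
        refine posBN σ ((him σ Fin.elim0).2 ?_)
        rwa [show (⇑g0 ∘ Fin.elim0) = (Fin.elim0 : Fin 0 → A)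
          from funext fun j => j.elim0]
      · exact fun σ h => posBN σ (pos_ge_of_models hBTi hne σ h)
    obtain ⟨C, iC, hCpres, hCpos, ⟨g⟩⟩ := continuation_s14 A N posAN
    have hCT : HModels C T := fun s hs => hCpres s (hN s hs)
    have hgimm : IsImmersion g := hApc C hCT g
    have posNA : ∀ σ : PosForm L 0, PosRealize N σ → PosRealize A σ := by
      intro σ h
      refine (hgimm σ Fin.elim0).2 ?_
      rw [show (⇑g ∘ Fin.elim0) = (Fin.elim0 : Fin 0 → C)
        from funext fun j => j.elim0]
      exact (hCpos σ).1 h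
    obtain ⟨D, iD, hDpres, hDpos, ⟨h⟩⟩ := continuation_s14 N A posNA
    have hDTi : HModels D (TiStar (L := L) A) := fun s hs => hDpres s hs
    have hcomp : IsImmersion (h.comp f) := hBpc D hDTi (h.comp f)
    intro n φ v
    constructor
    · exact fun hv => realize_hom f φ v hv
    · intro hv
      have h1 : φ.Realize (⇑h ∘ (⇑f ∘ v)) := realize_hom h φ (⇑f ∘ v) hv
      have h2 : φ.Realize (⇑(h.comp f) ∘ v) := h1
      exact (hcomp φ v).2 h2
  · intro B _ hB hBTi
    exact ⟨hBTi, fun N _ hN f => hB.2 N (hTsub N hN) f⟩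
end PositiveLogic
end
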